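/- Let n ≥ 2 and let (σ_H, g) be a normalized pair, with σ_H(a′, a) = ∏_{i=1}^{n−1} λ_i^{a′_n a_{in}}. Then for all a ∈ H(n) and b ∈ G(n−1): g(w(a), w(b)) = (∏_{i=1}^{n−1} λ_i^{b_i a_n (a_n − 1)/2} · g(v_{in}, u_i)^{a_n b_i (b_i − 1)/2}) · ∏_{1≤i<j≤n−1} g(v_{in}, u_j)^{b_i b_j a_n} (all exponents are integers). -/

import Mathlib

open scoped BigOperators

namespace FreeNilp

/-- Index set for pairs `(j,k)` with `j < k`. -/
abbrev PairIdx (n : ℕ) : Type := {p : Fin n × Fin n // p.1 < p.2}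

/-- The free nilpotent group of class 2 and rank `n`, realized on
`ℤ^n × ℤ^{n(n-1)/2}`. -/
@[ext] structure G (n : ℕ) where
  u : Fin n → ℤ
  v : PairIdx n → ℤ

namespace G

instance (n : ℕ) : Group (G n) where
  mul r s := ⟨fun i => r.u i + s.u i, fun p => r.v p + s.v p + r.u p.1.1 * s.u p.1.2⟩
  one := ⟨fun _ => 0, fun _ => 0⟩
  inv r := ⟨fun i => -r.u i, fun p => -r.v p + r.u p.1.1 * r.u p.1.2⟩
  mul_assoc r s t := by
    refine G.ext ?_ ?_ <;> funext x
    · show (r.u x + s.u x) + t.u x = r.u x + (s.u x + t.u x)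
      ring
    · show (r.v x + s.v x + r.u x.1.1 * s.u x.1.2) + t.v x +
          (r.u x.1.1 + s.u x.1.1) * t.u x.1.2 =
        r.v x + (s.v x + t.v x + s.u x.1.1 * t.u x.1.2) +
          r.u x.1.1 * (s.u x.1.2 + t.u x.1.2)
      ring
  one_mul r := by
    refine G.ext ?_ ?_ <;> funext x
    · show 0 + r.u x = r.u x
      ring
    · show 0 + r.v x + 0 * r.u x.1.2 = r.v x
      ring
  mul_one r := by
    refine G.ext ?_ ?_ <;> funext x
    · show r.u x + 0 = r.u x
      ring
    · show r.v x + 0 + r.u x.1.1 * 0 = r.v x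
      ring
  inv_mul_cancel r := by
    refine G.ext ?_ ?_ <;> funext x
    · show -r.u x + r.u x = 0
      ring
    · show (-r.v x + r.u x.1.1 * r.u x.1.2) + r.v x + -r.u x.1.1 * r.u x.1.2 = 0
      ring

@[simp] lemma mul_u {n : ℕ} (r s : G n) (i : Fin n) : (r * s).u i = r.u i + s.u i := rfl
@[simp] lemma mul_v {n : ℕ} (r s : G n) (p : PairIdx n) :
    (r * s).v p = r.v p + s.v p + r.u p.1.1 * s.u p.1.2 := rfl
@[simp] lemma one_u {n : ℕ} (i : Fin n) : (1 : G n).u i = 0 := rfl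
@[simp] lemma one_v {n : ℕ} (p : PairIdx n) : (1 : G n).v p = 0 := rfl
@[simp] lemma inv_u {n : ℕ} (r : G n) (i : Fin n) : (r⁻¹).u i = -r.u i := rfl
@[simp] lemma inv_v {n : ℕ} (r : G n) (p : PairIdx n) :
    (r⁻¹).v p = -r.v p + r.u p.1.1 * r.u p.1.2 := rfl

end G

/-- First-block coordinate `r_i`. -/
def uc {n : ℕ} (r : G n) (i : Fin n) : ℤ := r.u i

/-- Second-block coordinate `r_{jk}` (zero unless `j < k`). -/
def vc {n : ℕ} (r : G n) (j k : Fin n) : ℤ := if h : j < k then r.v ⟨(j, k), h⟩ else 0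

/-- A multiplier (2-cocycle with values in the circle group) of a group. -/
def IsMultiplier {Γ : Type*} [Group Γ] (σ : Γ → Γ → Circle) : Prop :=
  (∀ r s t : Γ, σ r s * σ (r * s) t = σ r (s * t) * σ s t) ∧
  ∀ r : Γ, σ r 1 = 1 ∧ σ 1 r = 1

/-- Similarity (cohomology) of multipliers. -/
def Similar {Γ : Type*} [Group Γ] (σ τ : Γ → Γ → Circle) : Prop :=
  ∃ β : Γ → Circle, ∀ r s : Γ, τ r s = β r * β s * (β (r * s))⁻¹ * σ r s

/-- The subgroup `H(n) ≅ ℤⁿ` of `G n`: only the coordinates `r_n` and `r_{jn}` may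
be nonzero. -/
def Hsub (n : ℕ) : Subgroup (G n) where
  carrier := {r | (∀ i : Fin n, (i : ℕ) + 1 < n → r.u i = 0) ∧
                  ∀ p : PairIdx n, (p.1.2 : ℕ) + 1 < n → r.v p = 0}
  one_mem' := ⟨fun _ _ => rfl, fun _ _ => rfl⟩
  mul_mem' := by
    rintro r s ⟨hr1, hr2⟩ ⟨hs1, hs2⟩
    refine ⟨fun i hi => ?_, fun p hp => ?_⟩
    · simp [hr1 i hi, hs1 i hi]
    · simp [hr2 p hp, hs2 p hp, hs1 p.1.2 hp]
  inv_mem' := by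
    rintro r ⟨hr1, hr2⟩
    refine ⟨fun i hi => ?_, fun p hp => ?_⟩
    · simp [hr1 i hi]
    · simp [hr2 p hp, hr1 p.1.2 hp]

/-- The subgroup `G(n-1)` of `G n`: the coordinates `r_n` and `r_{jn}` vanish. -/
def Gsub (n : ℕ) : Subgroup (G n) where
  carrier := {r | (∀ i : Fin n, (i : ℕ) + 1 = n → r.u i = 0) ∧
                  ∀ p : PairIdx n, (p.1.2 : ℕ) + 1 = n → r.v p = 0}
  one_mem' := ⟨fun _ _ => rfl, fun _ _ => rfl⟩
  mul_mem' := by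
    rintro r s ⟨hr1, hr2⟩ ⟨hs1, hs2⟩
    refine ⟨fun i hi => ?_, fun p hp => ?_⟩
    · simp [hr1 i hi, hs1 i hi]
    · simp [hr2 p hp, hs2 p hp, hs1 p.1.2 hp]
  inv_mem' := by
    rintro r ⟨hr1, hr2⟩
    refine ⟨fun i hi => ?_, fun p hp => ?_⟩
    · simp [hr1 i hi]
    · simp [hr2 p hp, hr1 p.1.2 hp]

lemma mem_Hsub_iff {n : ℕ} {r : G n} :
    r ∈ Hsub n ↔ (∀ i : Fin n, (i : ℕ) + 1 < n → r.u i = 0) ∧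
      ∀ p : PairIdx n, (p.1.2 : ℕ) + 1 < n → r.v p = 0 := Iff.rfl

lemma mem_Gsub_iff {n : ℕ} {r : G n} :
    r ∈ Gsub n ↔ (∀ i : Fin n, (i : ℕ) + 1 = n → r.u i = 0) ∧
      ∀ p : PairIdx n, (p.1.2 : ℕ) + 1 = n → r.v p = 0 := Iff.rfl

/-- `H(n)` is a normal subgroup; conjugation preserves it. -/
lemma conj_mem_Hsub {n : ℕ} (s : G n) {a : G n} (ha : a ∈ Hsub n) :
    s * a * s⁻¹ ∈ Hsub n := by
  obtain ⟨ha1, ha2⟩ := ha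
  refine ⟨fun i hi => ?_, fun p hp => ?_⟩
  · simp [ha1 i hi]
  · have hj : (p.1.1 : ℕ) + 1 < n := by
      have h2 : (p.1.1 : ℕ) < (p.1.2 : ℕ) := p.2
      omega
    simp [ha2 p hp, ha1 p.1.2 hp, ha1 p.1.1 hj]

/-- The action `α_b(a) = b a b⁻¹` of `G(n-1)` on `H(n)`. -/
def conjH {n : ℕ} (b : Gsub n) (a : Hsub n) : Hsub n :=
  ⟨(b : G n) * (a : G n) * (b : G n)⁻¹, conj_mem_Hsub _ a.2⟩

/-- The `H(n)`-part of the unique factorization `r = a·b`, `a ∈ H(n)`, `b ∈ G(n-1)`. -/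
def hpart {n : ℕ} (r : G n) : Hsub n :=
  ⟨⟨fun i => if (i : ℕ) + 1 = n then r.u i else 0,
    fun p => if (p.1.2 : ℕ) + 1 = n then r.v p else 0⟩, by
    refine ⟨fun i hi => ?_, fun p hp => ?_⟩
    · exact if_neg (by omega)
    · exact if_neg (by omega)⟩

/-- The `G(n-1)`-part of the unique factorization `r = a·b`. -/
def gpart {n : ℕ} (r : G n) : Gsub n :=
  ⟨⟨fun i => if (i : ℕ) + 1 = n then 0 else r.u i,
    fun p => if (p.1.2 : ℕ) + 1 = n then 0 else r.v p⟩, by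
    refine ⟨fun i hi => ?_, fun p hp => ?_⟩
    · exact if_pos hi
    · exact if_pos hp⟩

/-- `r` indeed factors as `hpart r * gpart r`. -/
lemma hpart_mul_gpart {n : ℕ} (r : G n) : ((hpart r : G n)) * (gpart r : G n) = r := by
  refine G.ext ?_ ?_ <;> funext x
  · show (if ((x : ℕ)) + 1 = n then r.u x else 0) + (if (x : ℕ) + 1 = n then 0 else r.u x) = r.u x
    split <;> ring
  · show (if ((x.1.2 : ℕ)) + 1 = n then r.v x else 0) +
      (if (x.1.2 : ℕ) + 1 = n then 0 else r.v x) +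
      (if ((x.1.1 : ℕ)) + 1 = n then r.u x.1.1 else 0) *
        (if (x.1.2 : ℕ) + 1 = n then 0 else r.u x.1.2) = r.v x
    have h2 : (x.1.1 : ℕ) < (x.1.2 : ℕ) := x.2
    have h3 : (x.1.2 : ℕ) < n := x.1.2.isLt
    rcases eq_or_ne ((x.1.2 : ℕ) + 1) n with h | h
    · rw [if_pos h, if_pos h, if_pos h, if_neg (by omega)]; ring
    · rw [if_neg h, if_neg h, if_neg h, if_neg (show ¬((x.1.1 : ℕ) + 1 = n) by omega)]
      ring

/-- An admissible pair `(σ_H, g)` (Mackey data with trivial multiplier on `G(n-1)`). -/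
structure AdmissiblePair (n : ℕ) (σH : Hsub n → Hsub n → Circle)
    (g : Hsub n → Gsub n → Circle) : Prop where
  multH : IsMultiplier σH
  g_one_right : ∀ a : Hsub n, g a 1 = 1
  g_one_left : ∀ b : Gsub n, g 1 b = 1
  g_add : ∀ (a a' : Hsub n) (b : Gsub n),
    g (a * a') b = σH (conjH b a) (conjH b a') * (σH a a')⁻¹ * (g a b * g a' b)
  g_mul : ∀ (a : Hsub n) (b b' : Gsub n), g a (b * b') = g (conjH b' a) b * g a b'

/-- An admissible triple `(σ_H, g, σ')`. -/
def AdmissibleTriple (n : ℕ) (σH : Hsub n → Hsub n → Circle)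
    (g : Hsub n → Gsub n → Circle) (σ' : Gsub n → Gsub n → Circle) : Prop :=
  AdmissiblePair n σH g ∧ IsMultiplier σ'

/-- The map `σ_n(a′b, ab′) = σ_H(a′, α_b(a)) g(a,b) σ′(b,b′)` defined via the unique
factorizations. -/
noncomputable def sigmaN {n : ℕ} (σH : Hsub n → Hsub n → Circle) (g : Hsub n → Gsub n → Circle)
    (σ' : Gsub n → Gsub n → Circle) (r s : G n) : Circle :=
  σH (hpart r) (conjH (gpart r) (hpart s)) * g (hpart s) (gpart r) *
    σ' (gpart r) (gpart s)

/-- The map `τ(a′b, ab′) = σ_H(a′, α_b(a)) g(a,b)` defined via the unique factorizations. -/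
noncomputable def tauN {n : ℕ} (σH : Hsub n → Hsub n → Circle) (g : Hsub n → Gsub n → Circle)
    (r s : G n) : Circle :=
  σH (hpart r) (conjH (gpart r) (hpart s)) * g (hpart s) (gpart r)

/-- The generator `u_i`. -/
def uE {n : ℕ} (i : Fin n) : G n := ⟨fun j => if j = i then 1 else 0, fun _ => 0⟩

/-- The generator `v_{jk}`. -/
def vE {n : ℕ} (j k : Fin n) : G n := ⟨fun _ => 0, fun p => if p.1 = (j, k) then 1 else 0⟩

/-- The last index `n` (i.e. `n-1` in `Fin n`). -/
def lastI (n : ℕ) (hn : 0 < n) : Fin n := ⟨n - 1, by omega⟩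

/-- `u_n` as an element of `H(n)`. -/
def unH {n : ℕ} (hn : 0 < n) : Hsub n :=
  ⟨uE (lastI n hn), by
    refine ⟨fun i hi => ?_, fun p hp => rfl⟩
    have h : i ≠ lastI n hn := by
      intro h; apply absurd hi; rw [h]; show ¬ (n - 1) + 1 < n; omega
    simp [uE, h]⟩

/-- `u_i` (for `i < n`) as an element of `G(n-1)`. -/
def uiG {n : ℕ} (i : Fin n) (hi : (i : ℕ) + 1 < n) : Gsub n :=
  ⟨uE i, by
    refine ⟨fun j hj => ?_, fun p hp => rfl⟩
    have h : j ≠ i := by intro h; rw [h] at hj; omega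
    simp [uE, h]⟩

/-- `v_{in}` (for `i < n`) as an element of `H(n)`. -/
def vinH {n : ℕ} (i : Fin n) (hi : (i : ℕ) + 1 < n) : Hsub n :=
  ⟨vE i (lastI n (by omega)), by
    refine ⟨fun j hj => rfl, fun p hp => ?_⟩
    have h : p.1 ≠ (i, lastI n (by omega)) := by
      intro h
      have h2 : (p.1.2 : ℕ) = n - 1 := by rw [h]; rfl
      omega
    simp [vE, h]⟩

/-- `v_{ij}` (for `j < n`) as an element of `G(n-1)`. -/
def vijG {n : ℕ} (i j : Fin n) (hj : (j : ℕ) + 1 < n) : Gsub n :=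
  ⟨vE i j, by
    refine ⟨fun k hk => rfl, fun p hp => ?_⟩
    have h : p.1 ≠ (i, j) := by
      intro h
      have h2 : (p.1.2 : ℕ) = (j : ℕ) := by rw [h]
      omega
    simp [vE, h]⟩

/-- The "word part" `w(a)` of `a ∈ H(n)`. -/
def wH {n : ℕ} (a : Hsub n) : Hsub n :=
  ⟨⟨(a : G n).u, fun _ => 0⟩,
    ⟨fun i hi => (mem_Hsub_iff.mp a.2).1 i hi, fun _ _ => rfl⟩⟩

/-- The "central part" `z(a)` of `a ∈ H(n)`. -/
def zH {n : ℕ} (a : Hsub n) : Hsub n :=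
  ⟨⟨fun _ => 0, (a : G n).v⟩,
    ⟨fun _ _ => rfl, fun p hp => (mem_Hsub_iff.mp a.2).2 p hp⟩⟩

/-- The "word part" `w(b)` of `b ∈ G(n-1)`. -/
def wG {n : ℕ} (b : Gsub n) : Gsub n :=
  ⟨⟨(b : G n).u, fun _ => 0⟩,
    ⟨fun i hi => (mem_Gsub_iff.mp b.2).1 i hi, fun _ _ => rfl⟩⟩

/-- The "central part" `z(b)` of `b ∈ G(n-1)`. -/
def zG {n : ℕ} (b : Gsub n) : Gsub n :=
  ⟨⟨fun _ => 0, (b : G n).v⟩,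
    ⟨fun _ _ => rfl, fun p hp => (mem_Gsub_iff.mp b.2).2 p hp⟩⟩

/-- `g(v_{in}, u_j)`, as a total function (equal to `1` outside the admissible range). -/
noncomputable def gvu {n : ℕ} (g : Hsub n → Gsub n → Circle) (i j : Fin n) : Circle :=
  if h : (i : ℕ) + 1 < n ∧ (j : ℕ) + 1 < n then g (vinH i h.1) (uiG j h.2) else 1

/-- `g(u_n, v_{ij})`, as a total function (equal to `1` outside the admissible range). -/
noncomputable def guv {n : ℕ} (g : Hsub n → Gsub n → Circle) (i j : Fin n) : Circle :=
  if h : (j : ℕ) + 1 < n then g (unH (by omega)) (vijG i j h) else 1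

/-- A normalized pair `(σ_H, g)`: admissible, with `σ_H` of the standard `λ`-form, and
`g(u_n, u_i) = 1` for all `1 ≤ i ≤ n-1`. -/
def Normalized {n : ℕ} (hn : 0 < n) (σH : Hsub n → Hsub n → Circle)
    (g : Hsub n → Gsub n → Circle) (lam : Fin n → Circle) : Prop :=
  AdmissiblePair n σH g ∧
  (∀ a' a : Hsub n, σH a' a =
    ∏ i ∈ Finset.univ.filter (fun i : Fin n => (i : ℕ) + 1 < n),
      lam i ^ (uc (a' : G n) (lastI n hn) * vc (a : G n) i (lastI n hn))) ∧
  ∀ (i : Fin n) (hi : (i : ℕ) + 1 < n), g (unH hn) (uiG i hi) = 1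

/-- The multiplier `σ_λ` of `G n` attached to a family of parameters
`λ_{i,jk} ∈ 𝕋` (`1 ≤ i ≤ k`, `1 ≤ j < k ≤ n`). -/
noncomputable def sigmaLam {n : ℕ} (lam : Fin n → Fin n → Fin n → Circle) (r s : G n) : Circle :=
  (∏ t ∈ Finset.univ.filter
      (fun t : Fin n × Fin n × Fin n => t.1 < t.2.1 ∧ t.2.1 < t.2.2),
    lam t.1 t.2.1 t.2.2 ^ (vc s t.2.1 t.2.2 * uc r t.1 + uc s t.2.2 * vc r t.1 t.2.1) *
    lam t.2.1 t.1 t.2.2 ^ (vc s t.1 t.2.2 * uc r t.2.1 +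
      uc s t.2.2 * (uc r t.1 * uc r t.2.1 - vc r t.1 t.2.1))) *
  ∏ p ∈ Finset.univ.filter (fun p : Fin n × Fin n => p.1 < p.2),
    lam p.1 p.1 p.2 ^ (vc s p.1 p.2 * uc r p.1 +
      uc s p.2 * (uc r p.1 * (uc r p.1 - 1) / 2)) *
    lam p.2 p.1 p.2 ^ (uc r p.2 * (vc s p.1 p.2 + uc r p.1 * uc s p.2) +
      uc r p.1 * (uc s p.2 * (uc s p.2 - 1) / 2))

/-- The extension of the parameter family to indices `i > k`, via
`λ_{k,ij} = λ_{i,jk}⁻¹ λ_{j,ik}` for `i < j < k`. -/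
noncomputable def lamExt {n : ℕ} (lam : Fin n → Fin n → Fin n → Circle) (i j k : Fin n) : Circle :=
  if i ≤ k then lam i j k else (lam j k i)⁻¹ * lam k j i


/-! ### Auxiliary infrastructure -/

section Infra

variable {n : ℕ}

lemma pfst_lt (p : PairIdx n) : (p.1.1 : ℕ) + 1 < n := by
  have h2 : (p.1.1 : ℕ) < (p.1.2 : ℕ) := p.2
  have h3 : (p.1.2 : ℕ) < n := p.1.2.isLt
  omega

@[simp] lemma coe_mul_H (x y : Hsub n) : ((x * y : Hsub n) : G n) = (x : G n) * (y : G n) := rfl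
@[simp] lemma coe_mul_G (x y : Gsub n) : ((x * y : Gsub n) : G n) = (x : G n) * (y : G n) := rfl
@[simp] lemma coe_one_H : (((1 : Hsub n)) : G n) = 1 := rfl
@[simp] lemma coe_one_G : (((1 : Gsub n)) : G n) = 1 := rfl

lemma conjH_coe_u (b : Gsub n) (a : Hsub n) (i : Fin n) :
    ((conjH b a : Hsub n) : G n).u i = (a : G n).u i := by
  show ((b : G n) * (a : G n) * (b : G n)⁻¹).u i = _
  simp

lemma conjH_coe_v (b : Gsub n) (a : Hsub n) (p : PairIdx n) :
    ((conjH b a : Hsub n) : G n).v p =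
      (a : G n).v p + (b : G n).u p.1.1 * (a : G n).u p.1.2 := by
  show ((b : G n) * (a : G n) * (b : G n)⁻¹).v p = _
  have h := (mem_Hsub_iff.mp a.2).1 p.1.1 (pfst_lt p)
  simp [h]; ring

/-- Central elements of `H(n)`: trivial `u`-part. -/
def Central (z : Hsub n) : Prop := ∀ i : Fin n, (z : G n).u i = 0

lemma conj_central {z : Hsub n} (hz : Central z) (b : Gsub n) : conjH b z = z := by
  apply Subtype.ext
  refine G.ext ?_ ?_ <;> funext x
  · rw [conjH_coe_u]
  · rw [conjH_coe_v, hz, mul_zero, add_zero]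

/-- explicit central elements -/
def zcn (n : ℕ) (c : Fin n → ℤ) : Hsub n :=
  ⟨⟨fun _ => 0, fun p => if (p.1.2 : ℕ) + 1 = n then c p.1.1 else 0⟩, by
    exact ⟨fun i _ => rfl, fun p hp => if_neg (by omega)⟩⟩

@[simp] lemma zcn_u (c : Fin n → ℤ) (x : Fin n) : ((zcn n c : Hsub n) : G n).u x = 0 := rfl
@[simp] lemma zcn_v (c : Fin n → ℤ) (p : PairIdx n) :
    ((zcn n c : Hsub n) : G n).v p = if (p.1.2 : ℕ) + 1 = n then c p.1.1 else 0 := rfl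

lemma zcn_central (c : Fin n → ℤ) : Central (zcn n c) := fun _ => rfl

lemma zcn_mul (c c' : Fin n → ℤ) : zcn n c * zcn n c' = zcn n (c + c') := by
  apply Subtype.ext
  refine G.ext ?_ ?_ <;> funext x
  · simp
  · simp only [coe_mul_H, G.mul_v, zcn_u, zcn_v, mul_zero, add_zero, Pi.add_apply]
    split <;> simp

/-- explicit powers of `u_n` -/
def unP (n : ℕ) (m : ℤ) : Hsub n :=
  ⟨⟨fun i => if (i : ℕ) + 1 = n then m else 0, fun _ => 0⟩, by
    exact ⟨fun i hi => if_neg (by omega), fun p _ => rfl⟩⟩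

@[simp] lemma unP_u (m : ℤ) (x : Fin n) :
    ((unP n m : Hsub n) : G n).u x = if (x : ℕ) + 1 = n then m else 0 := rfl
@[simp] lemma unP_v (m : ℤ) (p : PairIdx n) : ((unP n m : Hsub n) : G n).v p = 0 := rfl

lemma unP_mul (m m' : ℤ) : unP n m * unP n m' = unP n (m + m') := by
  apply Subtype.ext
  refine G.ext ?_ ?_ <;> funext x
  · simp only [coe_mul_H, G.mul_u, unP_u]
    split <;> simp
  · simp only [coe_mul_H, G.mul_v, unP_u, unP_v]
    rw [if_neg (show ¬((x.1.1 : ℕ) + 1 = n) from by have := pfst_lt x; omega)]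
    ring

/-- explicit powers of `u_i`, `i < n`, in `G(n-1)` -/
def uPow (i : Fin n) (hi : (i : ℕ) + 1 < n) (m : ℤ) : Gsub n :=
  ⟨⟨fun j => if j = i then m else 0, fun _ => 0⟩, by
    refine ⟨fun j hj => ?_, fun p _ => rfl⟩
    rcases eq_or_ne j i with h | h
    · subst h; exact absurd hj (by omega)
    · exact if_neg h⟩

@[simp] lemma uPow_u (i : Fin n) (hi : (i : ℕ) + 1 < n) (m : ℤ) (x : Fin n) :
    ((uPow i hi m : Gsub n) : G n).u x = if x = i then m else 0 := rfl
@[simp] lemma uPow_v (i : Fin n) (hi : (i : ℕ) + 1 < n) (m : ℤ) (p : PairIdx n) :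
    ((uPow i hi m : Gsub n) : G n).v p = 0 := rfl

lemma uPow_mul (i : Fin n) (hi : (i : ℕ) + 1 < n) (m m' : ℤ) :
    uPow i hi m * uPow i hi m' = uPow i hi (m + m') := by
  apply Subtype.ext
  refine G.ext ?_ ?_ <;> funext x
  · simp only [coe_mul_G, G.mul_u, uPow_u]
    split <;> simp
  · simp only [coe_mul_G, G.mul_v, uPow_u, uPow_v]
    have h2 : (x.1.1 : ℕ) < (x.1.2 : ℕ) := x.2
    rcases eq_or_ne x.1.1 i with h | h
    · rw [if_neg (show x.1.2 ≠ i from by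
        intro h'; rw [h, h'] at h2; omega)]
      ring
    · rw [if_neg h]; ring

lemma uPow_one (i : Fin n) (hi : (i : ℕ) + 1 < n) : uPow i hi 1 = uiG i hi := by
  apply Subtype.ext
  refine G.ext ?_ ?_ <;> funext x <;> rfl

/-- truncations of the `w`-part of `b` -/
def wtr (b : Gsub n) (k : ℕ) : Gsub n :=
  ⟨⟨fun i => if k ≤ (i : ℕ) then (b : G n).u i else 0, fun _ => 0⟩, by
    refine ⟨fun i hi => ?_, fun p _ => rfl⟩
    show (if k ≤ (i : ℕ) then (b : G n).u i else 0) = 0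
    rw [(mem_Gsub_iff.mp b.2).1 i hi, ite_self]⟩

@[simp] lemma wtr_u (b : Gsub n) (k : ℕ) (x : Fin n) :
    ((wtr b k : Gsub n) : G n).u x = if k ≤ (x : ℕ) then (b : G n).u x else 0 := rfl
@[simp] lemma wtr_v (b : Gsub n) (k : ℕ) (p : PairIdx n) :
    ((wtr b k : Gsub n) : G n).v p = 0 := rfl

lemma wtr_top (b : Gsub n) {k : ℕ} (hk : n ≤ k + 1) : wtr b k = 1 := by
  apply Subtype.ext
  refine G.ext ?_ ?_ <;> funext x
  · simp only [wtr_u, G.one_u, coe_one_G]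
    rcases le_or_gt k (x : ℕ) with h | h
    · rw [if_pos h, (mem_Gsub_iff.mp b.2).1 x (by have := x.isLt; omega)]
    · rw [if_neg (by omega)]
  · rfl

lemma wtr_step (b : Gsub n) {k : ℕ} (hk : k + 1 < n) :
    wtr b k = wtr b (k + 1) * uPow ⟨k, by omega⟩ hk ((b : G n).u ⟨k, by omega⟩) := by
  apply Subtype.ext
  refine G.ext ?_ ?_ <;> funext x
  · simp only [coe_mul_G, G.mul_u, wtr_u, uPow_u]
    rcases eq_or_ne x (⟨k, by omega⟩ : Fin n) with h | h
    · subst h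
      rw [if_pos le_rfl, if_neg (by simp), if_pos rfl]; ring
    · have hne : (x : ℕ) ≠ k := fun hc => h (Fin.ext hc)
      rw [if_neg h]
      rcases le_or_gt k (x : ℕ) with h' | h'
      · rw [if_pos h', if_pos (by omega)]; ring
      · rw [if_neg (by omega), if_neg (by omega)]; ring
  · simp only [coe_mul_G, G.mul_v, wtr_v, uPow_v, uPow_u, wtr_u]
    have h2 : (x.1.1 : ℕ) < (x.1.2 : ℕ) := x.2
    rcases eq_or_ne x.1.2 (⟨k, by omega⟩ : Fin n) with h | h
    · have : (x.1.1 : ℕ) < k := by rw [h] at h2; exact h2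
      rw [if_neg (by omega)]; ring
    · rw [if_neg h]; ring

/-- `f m = (f 1)^m` for `f` additive-to-multiplicative -/
lemma zhom_eq {Γ : Type*} [Group Γ] (f : ℤ → Γ)
    (hadd : ∀ s t : ℤ, f (s + t) = f s * f t) (m : ℤ) : f m = f 1 ^ m := by
  have h0 : f 0 = 1 := by
    have h := hadd 0 0
    rw [add_zero] at h
    exact (left_eq_mul.mp h)
  have hm1 : f (-1) = (f 1)⁻¹ := by
    have h := hadd 1 (-1)
    rw [add_neg_cancel, h0] at h
    exact (inv_eq_of_mul_eq_one_right h.symm).symm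
  induction m using Int.induction_on with
  | zero => rw [h0, zpow_zero]
  | succ k ih => rw [hadd k 1, ih, zpow_add_one]
  | pred k ih =>
      have h := hadd (-k) (-1)
      rw [← sub_eq_add_neg] at h
      rw [h, ih, hm1, zpow_sub_one]

lemma half_succ (k : ℤ) : (k + 1) * k / 2 = k * (k - 1) / 2 + k := by
  obtain ⟨t, ht⟩ := Int.even_mul_succ_self (k - 1)
  have h1 : k * (k - 1) = 2 * t := by
    rw [show k * (k - 1) = (k - 1) * (k - 1 + 1) from by ring, ht]; ring
  have h2 : (k + 1) * k = 2 * t + 2 * k := by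
    rw [show (k + 1) * k = (k - 1) * (k - 1 + 1) + 2 * k from by ring, ht]; ring
  rw [h1, h2]
  omega

end Infra

section MainDev

variable {n : ℕ} {σH : Hsub n → Hsub n → Circle}
  {g : Hsub n → Gsub n → Circle} {lam : Fin n → Circle}

@[simp] lemma uc_def (r : G n) (i : Fin n) : uc r i = r.u i := rfl

/-- The index sets used in the truncation induction. -/
def S1 (n k : ℕ) : Finset (Fin n) :=
  Finset.univ.filter fun i : Fin n => (i : ℕ) + 1 < n ∧ k ≤ (i : ℕ)

lemma S1_empty {k : ℕ} (hk : n ≤ k + 1) : S1 n k = ∅ :=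
  Finset.filter_eq_empty_iff.mpr (fun i _ => by omega)

lemma S1_insert {k : ℕ} (hk : k + 1 < n) :
    S1 n k = insert (⟨k, by omega⟩ : Fin n) (S1 n (k + 1)) := by
  ext i
  simp only [S1, Finset.mem_insert, Finset.mem_filter, Finset.mem_univ, true_and,
    Fin.ext_iff]
  constructor
  · rintro ⟨h1, h2⟩
    rcases eq_or_ne ((i : ℕ)) k with h | h
    · exact Or.inl h
    · exact Or.inr ⟨h1, by omega⟩
  · rintro (h | ⟨h1, h2⟩)
    · exact ⟨by omega, by omega⟩
    · exact ⟨h1, by omega⟩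

lemma K_not_mem_S1 {k : ℕ} (hk : k + 1 < n) :
    (⟨k, by omega⟩ : Fin n) ∉ S1 n (k + 1) := by
  simp only [S1, Finset.mem_filter, Finset.mem_univ, true_and]
  omega

lemma S1_zero : S1 n 0 = Finset.univ.filter (fun i : Fin n => (i : ℕ) + 1 < n) := by
  ext i; simp [S1]

/-- The abstract form of the multiplier `σ_H`. -/
def SigmaForm (h0 : 0 < n) (σH : Hsub n → Hsub n → Circle) (lam : Fin n → Circle) : Prop :=
  ∀ a' a : Hsub n, σH a' a =
    ∏ i ∈ Finset.univ.filter (fun i : Fin n => (i : ℕ) + 1 < n),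
      lam i ^ (uc (a' : G n) (lastI n h0) * vc (a : G n) i (lastI n h0))

lemma lastI_lt {i : Fin n} (hi : (i : ℕ) + 1 < n) (h0 : 0 < n) : i < lastI n h0 := by
  rw [Fin.lt_def]
  show (i : ℕ) < n - 1
  omega

lemma vc_last (h0 : 0 < n) (a : G n) {i : Fin n} (hi : (i : ℕ) + 1 < n) :
    vc a i (lastI n h0) = a.v ⟨(i, lastI n h0), lastI_lt hi h0⟩ := dif_pos _

lemma lastI_u_unP (h0 : 0 < n) (m : ℤ) :
    ((unP n m : Hsub n) : G n).u (lastI n h0) = m := by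
  rw [unP_u]
  exact if_pos (by show (n - 1) + 1 = n; omega)

lemma sigma_left_central (h0 : 0 < n) (hσ : SigmaForm h0 σH lam)
    {z : Hsub n} (hz : Central z) (a : Hsub n) : σH z a = 1 := by
  rw [hσ]
  refine Finset.prod_eq_one fun i _ => ?_
  rw [show uc (z : G n) (lastI n h0) = 0 from hz _, zero_mul, zpow_zero]

lemma sigma_conj_left (h0 : 0 < n) (hσ : SigmaForm h0 σH lam)
    (b : Gsub n) (a' a : Hsub n) : σH (conjH b a') a = σH a' a := by
  rw [hσ, hσ]
  refine Finset.prod_congr rfl fun i _ => ?_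
  rw [show uc ((conjH b a' : Hsub n) : G n) (lastI n h0) = uc (a' : G n) (lastI n h0) from
    conjH_coe_u b a' _]

lemma g_central_mul (h0 : 0 < n) (hA : AdmissiblePair n σH g) (hσ : SigmaForm h0 σH lam)
    {z : Hsub n} (hz : Central z) (a : Hsub n) (b : Gsub n) :
    g (z * a) b = g z b * g a b := by
  rw [hA.g_add, conj_central hz, sigma_left_central h0 hσ hz (conjH b a),
    sigma_left_central h0 hσ hz a, inv_one, one_mul, one_mul]

lemma g_mul_central (h0 : 0 < n) (hA : AdmissiblePair n σH g) (hσ : SigmaForm h0 σH lam)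
    {z : Hsub n} (hz : Central z) (a : Hsub n) (b : Gsub n) :
    g (a * z) b = g a b * g z b := by
  rw [hA.g_add, conj_central hz, sigma_conj_left h0 hσ b a z]
  simp

lemma g_central_b (hA : AdmissiblePair n σH g) {z : Hsub n} (hz : Central z)
    (b b' : Gsub n) : g z (b * b') = g z b * g z b' := by
  rw [hA.g_mul, conj_central hz]

lemma g_z_uPow (hA : AdmissiblePair n σH g) {z : Hsub n} (hz : Central z)
    (K : Fin n) (hk : (K : ℕ) + 1 < n) (m : ℤ) :
    g z (uPow K hk m) = g z (uiG K hk) ^ m := by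
  have h := zhom_eq (fun m => g z (uPow K hk m))
    (fun s t => by
      show g z (uPow K hk (s + t)) = g z (uPow K hk s) * g z (uPow K hk t)
      rw [← uPow_mul, g_central_b hA hz]) m
  rw [h, uPow_one]

/-- single central coordinate functions -/
def esingle (n : ℕ) (K : Fin n) (m : ℤ) : Fin n → ℤ := fun i => if i = K then m else 0

lemma esingle_add (K : Fin n) (s t : ℤ) :
    esingle n K (s + t) = esingle n K s + esingle n K t := by
  funext i
  simp only [esingle, Pi.add_apply]
  split <;> simp

lemma zcn_esingle_one (K : Fin n) (hk : (K : ℕ) + 1 < n) :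
    zcn n (esingle n K 1) = vinH K hk := by
  apply Subtype.ext
  refine G.ext ?_ ?_ <;> funext x
  · rfl
  · have h2 : (x.1.1 : ℕ) < (x.1.2 : ℕ) := x.2
    have h3 : (x.1.2 : ℕ) < n := x.1.2.isLt
    show (if (x.1.2 : ℕ) + 1 = n then (if x.1.1 = K then (1 : ℤ) else 0) else 0)
       = if x.1 = (K, lastI n (by omega)) then 1 else 0
    rcases eq_or_ne x.1 (K, lastI n (show 0 < n by omega)) with h | h
    · have e2 : (x.1.2 : ℕ) + 1 = n := by
        rw [h]; show (n - 1) + 1 = n; omega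
      have e1 : x.1.1 = K := by rw [h]
      rw [if_pos e2, if_pos e1, if_pos h]
    · rw [if_neg h]
      by_cases e2 : (x.1.2 : ℕ) + 1 = n
      · rw [if_pos e2]
        have e1 : x.1.1 ≠ K := by
          intro e1
          apply h
          have e3 : x.1.2 = lastI n (show 0 < n by omega) := Fin.ext (by
            show (x.1.2 : ℕ) = n - 1; omega)
          exact Prod.ext_iff.mpr ⟨e1, e3⟩
        rw [if_neg e1]
      · rw [if_neg e2]

lemma vinH_central (K : Fin n) (hk : (K : ℕ) + 1 < n) : Central (vinH K hk) :=
  fun _ => rfl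

lemma g_zcn_single (h0 : 0 < n) (hA : AdmissiblePair n σH g) (hσ : SigmaForm h0 σH lam)
    (K : Fin n) (hk : (K : ℕ) + 1 < n) (b : Gsub n) (m : ℤ) :
    g (zcn n (esingle n K m)) b = g (vinH K hk) b ^ m := by
  have h := zhom_eq (fun m => g (zcn n (esingle n K m)) b)
    (fun s t => by
      show g (zcn n (esingle n K (s + t))) b
          = g (zcn n (esingle n K s)) b * g (zcn n (esingle n K t)) b
      rw [esingle_add, ← zcn_mul, g_central_mul h0 hA hσ (zcn_central _)]) m
  rw [h, zcn_esingle_one K hk]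

lemma conj_uPow_unP (K : Fin n) (hk : (K : ℕ) + 1 < n) (m : ℤ) :
    conjH (uPow K hk m) (unP n 1) = unP n 1 * zcn n (esingle n K m) := by
  apply Subtype.ext
  refine G.ext ?_ ?_ <;> funext x
  · rw [conjH_coe_u]; simp
  · rw [conjH_coe_v]
    simp only [coe_mul_H, G.mul_v, unP_v, unP_u, zcn_v, zcn_u, uPow_u, esingle]
    have hp1 := pfst_lt x
    rw [if_neg (show ¬((x.1.1 : ℕ) + 1 = n) by omega)]
    split_ifs <;> ring

lemma conj_uiG_unP (K : Fin n) (hk : (K : ℕ) + 1 < n) :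
    conjH (uiG K hk) (unP n 1) = unP n 1 * zcn n (esingle n K 1) := by
  rw [← uPow_one K hk]
  exact conj_uPow_unP K hk 1

lemma unP_zero : unP n 0 = 1 := by
  apply Subtype.ext
  refine G.ext ?_ ?_ <;> funext x
  · show (if (x : ℕ) + 1 = n then (0:ℤ) else 0) = 0
    rw [ite_self]
  · rfl

lemma uPow_zero (K : Fin n) (hk : (K : ℕ) + 1 < n) : uPow K hk 0 = 1 := by
  apply Subtype.ext
  refine G.ext ?_ ?_ <;> funext x
  · show (if x = K then (0:ℤ) else 0) = 0
    rw [ite_self]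
  · rfl

lemma unP_one (h0 : 0 < n) : unP n 1 = unH h0 := by
  apply Subtype.ext
  refine G.ext ?_ ?_ <;> funext x
  · show (if (x : ℕ) + 1 = n then (1:ℤ) else 0) = if x = lastI n h0 then 1 else 0
    have hx := x.isLt
    rcases eq_or_ne x (lastI n h0) with h | h
    · rw [if_pos h, if_pos (by rw [h]; show (n-1) + 1 = n; omega)]
    · rw [if_neg h, if_neg (by
        intro hc
        exact h (Fin.ext (by show (x : ℕ) = n - 1; omega)))]
  · rfl

end MainDev

section MainDev2

variable {n : ℕ} {σH : Hsub n → Hsub n → Circle}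
  {g : Hsub n → Gsub n → Circle} {lam : Fin n → Circle}

/-- `g z (u_j)` as a total function. -/
noncomputable def Fz (g : Hsub n → Gsub n → Circle) (z : Hsub n) (j : Fin n) : Circle :=
  if h : (j : ℕ) + 1 < n then g z (uiG j h) else 1

lemma gz_wtr (hA : AdmissiblePair n σH g) {z : Hsub n} (hz : Central z) (b : Gsub n) :
    ∀ d k : ℕ, n ≤ k + d + 1 →
      g z (wtr b k) = ∏ j ∈ S1 n k, Fz g z j ^ ((b : G n).u j) := by
  intro d
  induction d with
  | zero =>
      intro k hk
      rw [wtr_top b (by omega), S1_empty (by omega), Finset.prod_empty, hA.g_one_right]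
  | succ d ih =>
      intro k hk
      by_cases hlt : k + 1 < n
      · rw [wtr_step b hlt, g_central_b hA hz, ih (k + 1) (by omega),
          g_z_uPow hA hz _ hlt, S1_insert hlt, Finset.prod_insert (K_not_mem_S1 hlt)]
        rw [show Fz g z (⟨k, by omega⟩ : Fin n) = g z (uiG ⟨k, by omega⟩ hlt) from dif_pos hlt]
        exact mul_comm _ _
      · rw [wtr_top b (by omega), S1_empty (by omega), Finset.prod_empty, hA.g_one_right]

lemma sigma_unP_unP (h0 : 0 < n) (hσ : SigmaForm h0 σH lam) (m : ℤ) :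
    σH (unP n m) (unP n 1) = 1 := by
  rw [hσ]
  refine Finset.prod_eq_one fun i hi => ?_
  have hi' : (i : ℕ) + 1 < n := (Finset.mem_filter.mp hi).2
  rw [vc_last h0 _ hi', unP_v, mul_zero, zpow_zero]

lemma sigma_conj_rec (h0 : 0 < n) (hσ : SigmaForm h0 σH lam) (b : Gsub n) (m : ℤ) :
    σH (conjH b (unP n m)) (conjH b (unP n 1)) =
      ∏ i ∈ Finset.univ.filter (fun i : Fin n => (i : ℕ) + 1 < n),
        lam i ^ (m * (b : G n).u i) := by
  rw [hσ]
  refine Finset.prod_congr rfl fun i hi => ?_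
  have hi' : (i : ℕ) + 1 < n := (Finset.mem_filter.mp hi).2
  congr 1
  have h1 : uc ((conjH b (unP n m) : Hsub n) : G n) (lastI n h0) = m := by
    rw [uc_def, conjH_coe_u, lastI_u_unP]
  have h2 : vc ((conjH b (unP n 1) : Hsub n) : G n) i (lastI n h0) = (b : G n).u i := by
    rw [vc_last h0 _ hi', conjH_coe_v, unP_v, zero_add]
    show (b : G n).u i * ((unP n 1 : Hsub n) : G n).u (lastI n h0) = (b : G n).u i
    rw [lastI_u_unP, mul_one]
  rw [h1, h2]

lemma half_succ' (m β : ℤ) :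
    m * β + β * (m * (m - 1) / 2) = β * ((m + 1) * ((m + 1) - 1) / 2) := by
  rw [add_sub_cancel_right, half_succ]
  ring

lemma rec1 (h0 : 0 < n) (hA : AdmissiblePair n σH g) (hσ : SigmaForm h0 σH lam)
    (b : Gsub n) (m : ℤ) :
    g (unP n (m + 1)) b =
      (∏ i ∈ Finset.univ.filter (fun i : Fin n => (i : ℕ) + 1 < n),
        lam i ^ (m * (b : G n).u i)) * (g (unP n m) b * g (unP n 1) b) := by
  rw [← unP_mul, hA.g_add, sigma_conj_rec h0 hσ b m, sigma_unP_unP h0 hσ m, inv_one, mul_one]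

lemma step1 (h0 : 0 < n) (hA : AdmissiblePair n σH g) (hσ : SigmaForm h0 σH lam)
    (b : Gsub n) (m : ℤ) :
    g (unP n m) b =
      (∏ i ∈ Finset.univ.filter (fun i : Fin n => (i : ℕ) + 1 < n),
        lam i ^ ((b : G n).u i * (m * (m - 1) / 2))) * g (unP n 1) b ^ m := by
  induction m using Int.induction_on with
  | zero =>
      rw [unP_zero, hA.g_one_left]
      norm_num
  | succ k ih =>
      rw [rec1 h0 hA hσ b k, ih]
      have hprod :
          (∏ i ∈ Finset.univ.filter (fun i : Fin n => (i : ℕ) + 1 < n),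
            lam i ^ ((k : ℤ) * (b : G n).u i)) *
          (∏ i ∈ Finset.univ.filter (fun i : Fin n => (i : ℕ) + 1 < n),
            lam i ^ ((b : G n).u i * ((k : ℤ) * ((k : ℤ) - 1) / 2))) =
          ∏ i ∈ Finset.univ.filter (fun i : Fin n => (i : ℕ) + 1 < n),
            lam i ^ ((b : G n).u i * (((k : ℤ) + 1) * (((k : ℤ) + 1) - 1) / 2)) := by
        rw [← Finset.prod_mul_distrib]
        refine Finset.prod_congr rfl fun i _ => ?_
        rw [← zpow_add]
        congr 1
        exact half_succ' (k : ℤ) _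
      rw [← hprod, zpow_add_one]
      group
  | pred k ih =>
      have hr := rec1 h0 hA hσ b (-(k : ℤ) - 1)
      rw [show (-(k : ℤ) - 1) + 1 = -(k : ℤ) by ring] at hr
      have heq :
          (∏ i ∈ Finset.univ.filter (fun i : Fin n => (i : ℕ) + 1 < n),
            lam i ^ ((-(k : ℤ) - 1) * (b : G n).u i)) *
            (g (unP n (-(k : ℤ) - 1)) b * g (unP n 1) b) =
          (∏ i ∈ Finset.univ.filter (fun i : Fin n => (i : ℕ) + 1 < n),
            lam i ^ ((b : G n).u i * (-(k : ℤ) * (-(k : ℤ) - 1) / 2))) *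
            g (unP n 1) b ^ (-(k : ℤ)) := by
        rw [← hr, ih]
      have hY : g (unP n (-(k : ℤ) - 1)) b =
          (∏ i ∈ Finset.univ.filter (fun i : Fin n => (i : ℕ) + 1 < n),
            lam i ^ ((-(k : ℤ) - 1) * (b : G n).u i))⁻¹ *
          ((∏ i ∈ Finset.univ.filter (fun i : Fin n => (i : ℕ) + 1 < n),
            lam i ^ ((b : G n).u i * (-(k : ℤ) * (-(k : ℤ) - 1) / 2))) *
            g (unP n 1) b ^ (-(k : ℤ))) * (g (unP n 1) b)⁻¹ := by
        rw [← heq]; group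
      have hpc :
          (∏ i ∈ Finset.univ.filter (fun i : Fin n => (i : ℕ) + 1 < n),
            lam i ^ ((-(k : ℤ) - 1) * (b : G n).u i)) *
          (∏ i ∈ Finset.univ.filter (fun i : Fin n => (i : ℕ) + 1 < n),
            lam i ^ ((b : G n).u i * ((-(k : ℤ) - 1) * ((-(k : ℤ) - 1) - 1) / 2))) =
          ∏ i ∈ Finset.univ.filter (fun i : Fin n => (i : ℕ) + 1 < n),
            lam i ^ ((b : G n).u i * (-(k : ℤ) * (-(k : ℤ) - 1) / 2)) := by
        rw [← Finset.prod_mul_distrib]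
        refine Finset.prod_congr rfl fun i _ => ?_
        rw [← zpow_add]
        congr 1
        have h := half_succ' (-(k : ℤ) - 1) ((b : G n).u i)
        rw [show (-(k : ℤ) - 1) + 1 = -(k : ℤ) by ring] at h
        exact h
      rw [hY, ← hpc, zpow_sub_one]
      group

lemma rec2 (h0 : 0 < n) (hA : AdmissiblePair n σH g) (hσ : SigmaForm h0 σH lam)
    (hgu : ∀ (i : Fin n) (hi : (i : ℕ) + 1 < n), g (unH h0) (uiG i hi) = 1)
    (K : Fin n) (hk : (K : ℕ) + 1 < n) (m : ℤ) :
    g (unP n 1) (uPow K hk (m + 1)) =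
      g (unP n 1) (uPow K hk m) * g (vinH K hk) (uiG K hk) ^ m := by
  have h1 : uPow K hk (m + 1) = uPow K hk m * uiG K hk := by
    rw [← uPow_one K hk, uPow_mul]
  rw [h1, hA.g_mul, conj_uiG_unP K hk,
    g_mul_central h0 hA hσ (zcn_central _), g_zcn_single h0 hA hσ K hk, zpow_one,
    g_z_uPow hA (vinH_central K hk) K hk, unP_one h0, hgu K hk, mul_one]

lemma g_un_uPow (h0 : 0 < n) (hA : AdmissiblePair n σH g) (hσ : SigmaForm h0 σH lam)
    (hgu : ∀ (i : Fin n) (hi : (i : ℕ) + 1 < n), g (unH h0) (uiG i hi) = 1)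
    (K : Fin n) (hk : (K : ℕ) + 1 < n) (m : ℤ) :
    g (unP n 1) (uPow K hk m) = g (vinH K hk) (uiG K hk) ^ (m * (m - 1) / 2) := by
  induction m using Int.induction_on with
  | zero =>
      rw [uPow_zero, hA.g_one_right]
      norm_num
  | succ k ih =>
      rw [rec2 h0 hA hσ hgu K hk k, ih, ← zpow_add]
      congr 1
      rw [add_sub_cancel_right, half_succ]
  | pred k ih =>
      have hr := rec2 h0 hA hσ hgu K hk (-(k : ℤ) - 1)
      rw [show (-(k : ℤ) - 1) + 1 = -(k : ℤ) by ring] at hr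
      have h2 : g (unP n 1) (uPow K hk (-(k : ℤ) - 1)) =
          g (unP n 1) (uPow K hk (-(k : ℤ))) *
            (g (vinH K hk) (uiG K hk) ^ (-(k : ℤ) - 1))⁻¹ := by
        rw [hr]; group
      rw [h2, ih, ← zpow_neg, ← zpow_add]
      congr 1
      have hs := half_succ (-(k : ℤ) - 1)
      rw [show (-(k : ℤ) - 1 + 1) = -(k : ℤ) by ring] at hs
      linarith [hs]

end MainDev2

section MainDev3

variable {n : ℕ} {σH : Hsub n → Hsub n → Circle}
  {g : Hsub n → Gsub n → Circle} {lam : Fin n → Circle}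

lemma gvu_eq (i j : Fin n) (hi : (i : ℕ) + 1 < n) (hj : (j : ℕ) + 1 < n) :
    gvu g i j = g (vinH i hi) (uiG j hj) := dif_pos ⟨hi, hj⟩

lemma step2 (h0 : 0 < n) (hA : AdmissiblePair n σH g) (hσ : SigmaForm h0 σH lam)
    (hgu : ∀ (i : Fin n) (hi : (i : ℕ) + 1 < n), g (unH h0) (uiG i hi) = 1)
    (b : Gsub n) :
    ∀ d k : ℕ, n ≤ k + d + 1 →
      g (unP n 1) (wtr b k) =
        (∏ i ∈ S1 n k, gvu g i i ^ ((b : G n).u i * ((b : G n).u i - 1) / 2)) *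
        ∏ i ∈ S1 n k, ∏ j ∈ S1 n ((i : ℕ) + 1),
          gvu g i j ^ ((b : G n).u i * (b : G n).u j) := by
  intro d
  induction d with
  | zero =>
      intro k hk
      rw [wtr_top b (by omega), S1_empty (by omega), Finset.prod_empty,
        Finset.prod_empty, hA.g_one_right, one_mul]
  | succ d ih =>
      intro k hk
      by_cases hlt : k + 1 < n
      · have hko : k < n := by omega
        set K : Fin n := (⟨k, by omega⟩ : Fin n) with hK
        have hinner : g (vinH K hlt) (wtr b (k + 1)) ^ ((b : G n).u K) =
            ∏ j ∈ S1 n (k + 1), gvu g K j ^ ((b : G n).u K * (b : G n).u j) := by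
          rw [gz_wtr hA (vinH_central K hlt) b d (k + 1) (by omega), ← Finset.prod_zpow]
          refine Finset.prod_congr rfl fun j hj => ?_
          have hj' : (j : ℕ) + 1 < n := (Finset.mem_filter.mp hj).2.1
          rw [← zpow_mul]
          rw [show Fz g (vinH K hlt) j = g (vinH K hlt) (uiG j hj') from dif_pos hj',
            ← gvu_eq (g := g) K j hlt hj']
          congr 1
          ring
        rw [wtr_step b hlt, hA.g_mul, conj_uPow_unP _ hlt _,
          g_mul_central h0 hA hσ (zcn_central _), g_zcn_single h0 hA hσ _ hlt,
          g_un_uPow h0 hA hσ hgu _ hlt, ih (k + 1) (by omega), hinner,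
          ← gvu_eq (g := g) K K hlt hlt, S1_insert hlt, Finset.prod_insert (K_not_mem_S1 hlt),
          Finset.prod_insert (K_not_mem_S1 hlt)]
        have hcomm : ∀ A B Q R : Circle, ((A * B) * Q) * R = (R * A) * (Q * B) := by
          intro A B Q R
          simp only [mul_comm, mul_left_comm, mul_assoc]
        exact hcomm _ _ _ _
      · rw [wtr_top b (by omega), S1_empty (by omega), Finset.prod_empty,
          Finset.prod_empty, hA.g_one_right, one_mul]

end MainDev3

section MainDev4

variable {n : ℕ}

lemma nested_to_pairs (f : Fin n → Fin n → Circle) :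
    (∏ i ∈ S1 n 0, ∏ j ∈ S1 n ((i : ℕ) + 1), f i j) =
      ∏ p ∈ Finset.univ.filter
          (fun p : Fin n × Fin n => p.1 < p.2 ∧ (p.2 : ℕ) + 1 < n), f p.1 p.2 := by
  have hset : Finset.univ.filter
      (fun p : Fin n × Fin n => p.1 < p.2 ∧ (p.2 : ℕ) + 1 < n)
      = (S1 n 0).biUnion (fun i => (S1 n ((i : ℕ) + 1)).image (fun j => (i, j))) := by
    ext p
    have h3 := p.2.isLt
    simp only [Finset.mem_filter, Finset.mem_univ, true_and, Finset.mem_biUnion,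
      Finset.mem_image, S1]
    constructor
    · rintro ⟨h1, h2⟩
      have h1' : (p.1 : ℕ) < (p.2 : ℕ) := h1
      exact ⟨p.1, ⟨by omega, by omega⟩, p.2, ⟨by omega, by omega⟩, rfl⟩
    · rintro ⟨i, hi, j, hj, rfl⟩
      exact ⟨Fin.lt_def.mpr (show (i : ℕ) < (j : ℕ) by omega), hj.1⟩
  have hdisj : (↑(S1 n 0) : Set (Fin n)).PairwiseDisjoint
      (fun i => (S1 n ((i : ℕ) + 1)).image (fun j => (i, j))) := by
    intro x _ y _ hxy
    refine Finset.disjoint_left.mpr ?_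
    rintro p hp hq
    obtain ⟨j, _, rfl⟩ := Finset.mem_image.mp hp
    obtain ⟨j', _, he⟩ := Finset.mem_image.mp hq
    exact hxy ((Prod.mk.injEq _ _ _ _).mp he).1.symm
  rw [hset, Finset.prod_biUnion hdisj]
  refine Finset.prod_congr rfl fun i _ => ?_
  rw [Finset.prod_image (fun x _ y _ h => ((Prod.mk.injEq _ _ _ _).mp h).2)]

lemma wH_eq (h0 : 0 < n) (a : Hsub n) : wH a = unP n ((a : G n).u (lastI n h0)) := by
  apply Subtype.ext
  refine G.ext ?_ ?_ <;> funext x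
  · show (a : G n).u x = if (x : ℕ) + 1 = n then (a : G n).u (lastI n h0) else 0
    rcases eq_or_ne ((x : ℕ) + 1) n with h | h
    · rw [if_pos h]
      congr 1
      exact Fin.ext (by show (x : ℕ) = n - 1; omega)
    · rw [if_neg h]
      exact (mem_Hsub_iff.mp a.2).1 x (by have := x.isLt; omega)
  · rfl

lemma wG_eq (b : Gsub n) : wG b = wtr b 0 := by
  apply Subtype.ext
  refine G.ext ?_ ?_ <;> funext x
  · show (b : G n).u x = if 0 ≤ (x : ℕ) then (b : G n).u x else 0
    rw [if_pos (Nat.zero_le _)]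
  · rfl

lemma wtr_zero_u (b : Gsub n) (x : Fin n) :
    ((wtr b 0 : Gsub n) : G n).u x = (b : G n).u x := by
  rw [wtr_u, if_pos (Nat.zero_le _)]

end MainDev4

section FinalAssembly

variable {n : ℕ} {σH : Hsub n → Hsub n → Circle}
  {g : Hsub n → Gsub n → Circle} {lam : Fin n → Circle}

lemma final_form (h0 : 0 < n) (hA : AdmissiblePair n σH g) (hσ : SigmaForm h0 σH lam)
    (hgu : ∀ (i : Fin n) (hi : (i : ℕ) + 1 < n), g (unH h0) (uiG i hi) = 1)
    (a : Hsub n) (b : Gsub n) :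
    g (wH a) (wG b) =
      (∏ i ∈ Finset.univ.filter (fun i : Fin n => (i : ℕ) + 1 < n),
        lam i ^ ((b : G n).u i *
            ((a : G n).u (lastI n h0) * ((a : G n).u (lastI n h0) - 1) / 2)) *
        gvu g i i ^ ((a : G n).u (lastI n h0) *
            ((b : G n).u i * ((b : G n).u i - 1) / 2))) *
      ∏ p ∈ Finset.univ.filter
          (fun p : Fin n × Fin n => p.1 < p.2 ∧ (p.2 : ℕ) + 1 < n),
        gvu g p.1 p.2 ^ ((b : G n).u p.1 * (b : G n).u p.2 *
          (a : G n).u (lastI n h0)) := by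
  rw [wH_eq h0 a, wG_eq b]
  generalize (a : G n).u (lastI n h0) = A
  rw [step1 h0 hA hσ (wtr b 0) A, step2 h0 hA hσ hgu b n 0 (by omega)]
  simp only [wtr_zero_u]
  rw [S1_zero, mul_zpow, ← Finset.prod_zpow, ← Finset.prod_zpow]
  have hP1 : (∏ i ∈ Finset.univ.filter (fun i : Fin n => (i : ℕ) + 1 < n),
        (gvu g i i ^ ((b : G n).u i * ((b : G n).u i - 1) / 2)) ^ A) =
      ∏ i ∈ Finset.univ.filter (fun i : Fin n => (i : ℕ) + 1 < n),
        gvu g i i ^ (A * ((b : G n).u i * ((b : G n).u i - 1) / 2)) := by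
    refine Finset.prod_congr rfl fun i _ => ?_
    rw [← zpow_mul, mul_comm ((b : G n).u i * ((b : G n).u i - 1) / 2) A]
  have hP2 : (∏ i ∈ Finset.univ.filter (fun i : Fin n => (i : ℕ) + 1 < n),
        (∏ j ∈ S1 n ((i : ℕ) + 1),
          gvu g i j ^ ((b : G n).u i * (b : G n).u j)) ^ A) =
      ∏ p ∈ Finset.univ.filter
          (fun p : Fin n × Fin n => p.1 < p.2 ∧ (p.2 : ℕ) + 1 < n),
        gvu g p.1 p.2 ^ ((b : G n).u p.1 * (b : G n).u p.2 * A) := by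
    rw [show (Finset.univ.filter (fun i : Fin n => (i : ℕ) + 1 < n)) = S1 n 0 from
      S1_zero.symm]
    rw [← nested_to_pairs (fun i j => gvu g i j ^ ((b : G n).u i * (b : G n).u j * A))]
    refine Finset.prod_congr rfl fun i _ => ?_
    rw [← Finset.prod_zpow]
    refine Finset.prod_congr rfl fun j _ => ?_
    rw [← zpow_mul]
  rw [hP1, hP2, Finset.prod_mul_distrib, mul_assoc]

end FinalAssembly

/-- the value of `g` on the `w`-parts. -/
theorem g_w_parts (n : ℕ) (hn : 2 ≤ n) (lam : Fin n → Circle)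
    (σH : Hsub n → Hsub n → Circle) (g : Hsub n → Gsub n → Circle)
    (hnorm : Normalized (show 0 < n by omega) σH g lam) :
    ∀ (a : Hsub n) (b : Gsub n),
      g (wH a) (wG b) =
        (∏ i ∈ Finset.univ.filter (fun i : Fin n => (i : ℕ) + 1 < n),
          lam i ^ (uc (b : G n) i * (uc (a : G n) (lastI n (by omega)) *
              (uc (a : G n) (lastI n (by omega)) - 1) / 2)) *
          gvu g i i ^ (uc (a : G n) (lastI n (by omega)) *
              (uc (b : G n) i * (uc (b : G n) i - 1) / 2))) *
        ∏ p ∈ Finset.univ.filter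
            (fun p : Fin n × Fin n => p.1 < p.2 ∧ (p.2 : ℕ) + 1 < n),
          gvu g p.1 p.2 ^ (uc (b : G n) p.1 * uc (b : G n) p.2 *
            uc (a : G n) (lastI n (by omega))) := by
  obtain ⟨hA, hσ0, hgu0⟩ := hnorm
  intro a b
  have h0 : 0 < n := by omega
  have hσ : SigmaForm h0 σH lam := hσ0
  have hgu : ∀ (i : Fin n) (hi : (i : ℕ) + 1 < n), g (unH h0) (uiG i hi) = 1 := hgu0
  exact final_form h0 hA hσ hgu a b

end FreeNilp
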